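/- Let k ≥ 2 be an integer, r > 0, and define f_k^r(ρ) := 2(k²-1)·sin²θ/ρ³ + 4(k-1)·sin²θ·cosθ/ρ³ + 8(1-k)·r²·sin³θ/ρ², with θ = θ(ρ) the skyrmion profile. Then ρ⁵·f_k^r(ρ) → -8(k-1)(8r² - k - 3) as ρ → ∞. -/

import Mathlib

open Real Filter

lemma sin_theta (ρ : ℝ) : Real.sin (π - 2 * Real.arctan ρ) = 2 * ρ / (1 + ρ ^ 2) := by
  have hs : Real.sqrt (1 + ρ ^ 2) * Real.sqrt (1 + ρ ^ 2) = 1 + ρ ^ 2 :=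
    Real.mul_self_sqrt (by positivity)
  have hne : Real.sqrt (1 + ρ ^ 2) ≠ 0 := by positivity
  rw [Real.sin_pi_sub, Real.sin_two_mul, Real.sin_arctan, Real.cos_arctan]
  rw [← hs]
  field_simp
  simp only [Real.sq_sqrt (by positivity : (0:ℝ) ≤ 1 + ρ ^ 2)]

lemma cos_theta (ρ : ℝ) : Real.cos (π - 2 * Real.arctan ρ) = (ρ ^ 2 - 1) / (1 + ρ ^ 2) := by
  have hne : (1 : ℝ) + ρ ^ 2 ≠ 0 := by positivity
  rw [Real.cos_pi_sub, Real.cos_two_mul, Real.cos_arctan]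
  rw [div_pow, Real.sq_sqrt (by positivity : (0:ℝ) ≤ 1 + ρ ^ 2)]
  field_simp
  ring

theorem effective_potential_tail (k : ℕ) (hk : 2 ≤ k) (r : ℝ) (hr : 0 < r)
    (θ : ℝ → ℝ) (hθ : ∀ ρ : ℝ, θ ρ = π - 2 * Real.arctan ρ) :
    Tendsto
      (fun ρ : ℝ => ρ ^ 5 *
        (2 * ((k:ℝ) ^ 2 - 1) * Real.sin (θ ρ) ^ 2 / ρ ^ 3
          + 4 * ((k:ℝ) - 1) * Real.sin (θ ρ) ^ 2 * Real.cos (θ ρ) / ρ ^ 3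
          + 8 * (1 - (k:ℝ)) * r ^ 2 * Real.sin (θ ρ) ^ 3 / ρ ^ 2))
      atTop
      (nhds (-8 * ((k:ℝ) - 1) * (8 * r ^ 2 - (k:ℝ) - 3))) := by
  have htop : Tendsto (fun ρ : ℝ => 1 + ρ ^ 2) atTop atTop := by
    apply tendsto_atTop_add_const_left
    exact tendsto_pow_atTop (by norm_num)
  have hinv : Tendsto (fun ρ : ℝ => (1 + ρ ^ 2)⁻¹) atTop (nhds 0) :=
    htop.inv_tendsto_atTop
  have hu : Tendsto (fun ρ : ℝ => ρ ^ 2 / (1 + ρ ^ 2)) atTop (nhds 1) := by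
    have : Tendsto (fun ρ : ℝ => 1 - (1 + ρ ^ 2)⁻¹) atTop (nhds (1 - 0)) :=
      tendsto_const_nhds.sub hinv
    rw [sub_zero] at this
    refine this.congr (fun ρ => ?_)
    have hne : (1 : ℝ) + ρ ^ 2 ≠ 0 := by positivity
    field_simp
    ring
  have hv : Tendsto (fun ρ : ℝ => (ρ ^ 2 - 1) / (1 + ρ ^ 2)) atTop (nhds 1) := by
    have : Tendsto (fun ρ : ℝ => 1 - 2 * (1 + ρ ^ 2)⁻¹) atTop (nhds (1 - 2 * 0)) :=
      tendsto_const_nhds.sub (tendsto_const_nhds.mul hinv)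
    rw [mul_zero, sub_zero] at this
    refine this.congr (fun ρ => ?_)
    have hne : (1 : ℝ) + ρ ^ 2 ≠ 0 := by positivity
    field_simp
    ring
  have hg : Tendsto (fun ρ : ℝ =>
      8 * ((k:ℝ) ^ 2 - 1) * (ρ ^ 2 / (1 + ρ ^ 2)) ^ 2
      + 16 * ((k:ℝ) - 1) * (ρ ^ 2 / (1 + ρ ^ 2)) ^ 2 * ((ρ ^ 2 - 1) / (1 + ρ ^ 2))
      - 64 * ((k:ℝ) - 1) * r ^ 2 * (ρ ^ 2 / (1 + ρ ^ 2)) ^ 3) atTop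
      (nhds (8 * ((k:ℝ) ^ 2 - 1) * 1 ^ 2 + 16 * ((k:ℝ) - 1) * 1 ^ 2 * 1
        - 64 * ((k:ℝ) - 1) * r ^ 2 * 1 ^ 3)) := by
    exact ((tendsto_const_nhds.mul (hu.pow 2)).add
      ((tendsto_const_nhds.mul (hu.pow 2)).mul hv)).sub
      (tendsto_const_nhds.mul (hu.pow 3))
  have hlim : (8 * ((k:ℝ) ^ 2 - 1) * 1 ^ 2 + 16 * ((k:ℝ) - 1) * 1 ^ 2 * 1
      - 64 * ((k:ℝ) - 1) * r ^ 2 * 1 ^ 3)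
      = -8 * ((k:ℝ) - 1) * (8 * r ^ 2 - (k:ℝ) - 3) := by ring
  rw [hlim] at hg
  refine hg.congr' ?_
  filter_upwards [eventually_ge_atTop (1 : ℝ)] with ρ hρ
  have h0 : ρ ≠ 0 := by linarith
  have hne : (1 : ℝ) + ρ ^ 2 ≠ 0 := by positivity
  rw [hθ, sin_theta, cos_theta]
  field_simp
  ring
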